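/- Margin assumption implies variance bound: suppose P(|2η(X) − 1| ≤ h) ≤ r·h^β for all h > 0, with r ≥ 1, β ≥ 0. Then for every classifier t : X → {0,1}, E[|t(X) − s(X)|] ≤ ((β+1)/β^{β/(β+1)}) · r^{1/(β+1)} · ℓ(s,t)^{β/(β+1)} ≤ 2 r^{1/(β+1)} ℓ(s,t)^{β/(β+1)}, where s is the Bayes classifier and ℓ(s,t) is the 0–1 excess risk. -/

import Mathlib

open MeasureTheory

theorem aux_two (β : ℝ) (hβ : 0 ≤ β) : (β+1)/β^(β/(β+1)) ≤ 2 := by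
  have hp : (0:ℝ) < β + 1 := by linarith
  rcases eq_or_lt_of_le hβ with h0 | h0
  · rw [← h0]; norm_num
  · have hpow : 0 < β ^ (β/(β+1)) := Real.rpow_pos_of_pos h0 _
    rw [div_le_iff₀ hpow]
    have hconv := Real.convexOn_mul_log.2 (Set.mem_Ici.2 hβ) (Set.mem_Ici.2 (zero_le_one))
      (by norm_num : (0:ℝ) ≤ 1/2) (by norm_num : (0:ℝ) ≤ 1/2) (by norm_num)
    simp only [smul_eq_mul, Real.log_one, mul_zero, mul_one] at hconv
    have hmid : (1/2 : ℝ) * β + 1/2 = (β+1)/2 := by ring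
    have hlog2 : Real.log ((β+1)/2) = Real.log (β+1) - Real.log 2 := by
      rw [Real.log_div hp.ne' (by norm_num)]
    have h2 : Real.log (β+1) ≤ Real.log 2 + (β/(β+1)) * Real.log β := by
      have h4 : (β/(β+1)) * Real.log β = (β * Real.log β)/(β+1) := by ring
      rw [h4, ← sub_le_iff_le_add', le_div_iff₀ hp]
      rw [hmid, hlog2] at hconv
      nlinarith [hconv]
    calc β + 1 = Real.exp (Real.log (β+1)) := (Real.exp_log hp).symm
      _ ≤ Real.exp (Real.log 2 + (β/(β+1)) * Real.log β) := Real.exp_le_exp.2 h2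
      _ = 2 * β ^ (β/(β+1)) := by
          rw [Real.exp_add, Real.exp_log (by norm_num : (0:ℝ) < 2),
            Real.rpow_def_of_pos h0, mul_comm (Real.log β)]

theorem stmt_13 {α : Type*} [MeasurableSpace α] (μ : Measure α) [IsProbabilityMeasure μ]
    (η : α → ℝ) (hηm : Measurable η) (hη : ∀ x, η x ∈ Set.Icc (0 : ℝ) 1)
    (s : α → Bool) (hs : ∀ x, s x = true ↔ 1 / 2 ≤ η x) (hsm : Measurable s)
    (r β : ℝ) (hr : 1 ≤ r) (hβ : 0 ≤ β)
    (hmargin : ∀ h : ℝ, 0 < h → (μ {x | |2 * η x - 1| ≤ h}).toReal ≤ r * h ^ β)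
    (t : α → Bool) (ht : Measurable t)
    (ℓ : ℝ)
    (hℓ : ℓ = ∫ x, |2 * η x - 1| * |(if t x then (1 : ℝ) else 0) - (if s x then 1 else 0)| ∂μ) :
    (∫ x, |(if t x then (1 : ℝ) else 0) - (if s x then 1 else 0)| ∂μ)
        ≤ ((β + 1) / β ^ (β / (β + 1))) * r ^ (1 / (β + 1)) * ℓ ^ (β / (β + 1)) ∧
      ((β + 1) / β ^ (β / (β + 1))) * r ^ (1 / (β + 1)) * ℓ ^ (β / (β + 1))
        ≤ 2 * r ^ (1 / (β + 1)) * ℓ ^ (β / (β + 1)) := by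
  have hr0 : (0:ℝ) < r := lt_of_lt_of_le one_pos hr
  have hp : (0:ℝ) < β + 1 := by linarith
  set g : α → ℝ := fun x => |(if t x then (1 : ℝ) else 0) - (if s x then 1 else 0)| with hg_def
  have hgm : Measurable g := by
    apply Measurable.abs
    exact ((measurable_from_top (f := fun b : Bool => if b then (1:ℝ) else 0)).comp ht).sub
      ((measurable_from_top (f := fun b : Bool => if b then (1:ℝ) else 0)).comp hsm)
  have hg01 : ∀ x, 0 ≤ g x ∧ g x ≤ 1 := by
    intro x
    simp only [hg_def]
    cases t x <;> cases s x <;> norm_num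
  have hm1 : ∀ x, |2 * η x - 1| ≤ 1 := by
    intro x
    have := (hη x).1; have := (hη x).2
    rw [abs_le]; constructor <;> linarith
  have hg_int : Integrable g μ := by
    refine (integrable_const (1:ℝ)).mono' hgm.aestronglyMeasurable ?_
    filter_upwards with x
    rw [Real.norm_eq_abs, abs_of_nonneg (hg01 x).1]
    exact (hg01 x).2
  have hmgm : Measurable (fun x => |2 * η x - 1| * g x) :=
    (((hηm.const_mul 2).sub measurable_const).abs).mul hgm
  have hmg_int : Integrable (fun x => |2 * η x - 1| * g x) μ := by
    refine (integrable_const (1:ℝ)).mono' hmgm.aestronglyMeasurable ?_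
    filter_upwards with x
    rw [Real.norm_eq_abs, abs_of_nonneg (mul_nonneg (abs_nonneg _) (hg01 x).1)]
    exact mul_le_one₀ (hm1 x) (hg01 x).1 (hg01 x).2
  have hl0 : 0 ≤ ℓ := by
    rw [hℓ]
    exact integral_nonneg fun x => mul_nonneg (abs_nonneg _) (abs_nonneg _)
  -- the key inequality
  have key : ∀ h : ℝ, 0 < h → (∫ x, g x ∂μ) ≤ r * h ^ β + ℓ / h := by
    intro h hh
    set A := {x | |2 * η x - 1| ≤ h} with hA_def
    have hA : MeasurableSet A :=
      measurableSet_le (((hηm.const_mul 2).sub measurable_const).abs) measurable_const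
    have hrhs_int : Integrable (fun x => A.indicator (fun _ => (1:ℝ)) x
        + (|2 * η x - 1| * g x) / h) μ :=
      ((integrable_const 1).indicator hA).add (hmg_int.div_const h)
    have hpt : ∀ x, g x ≤ A.indicator (fun _ => (1:ℝ)) x + (|2 * η x - 1| * g x) / h := by
      intro x
      by_cases hx : x ∈ A
      · rw [Set.indicator_of_mem hx]
        have := (hg01 x).2
        have h2 : 0 ≤ (|2 * η x - 1| * g x) / h :=
          div_nonneg (mul_nonneg (abs_nonneg _) (hg01 x).1) hh.le
        linarith
      · rw [Set.indicator_of_notMem hx, zero_add, le_div_iff₀ hh]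
        have hx' : h < |2 * η x - 1| := by
          simpa [hA_def, not_le] using hx
        nlinarith [(hg01 x).1, hx']
    calc (∫ x, g x ∂μ) ≤ ∫ x, (A.indicator (fun _ => (1:ℝ)) x
          + (|2 * η x - 1| * g x) / h) ∂μ := integral_mono hg_int hrhs_int hpt
      _ = (μ A).toReal + ℓ / h := by
          rw [integral_add ((integrable_const 1).indicator hA) (hmg_int.div_const h),
            integral_div, ← hℓ]
          congr 1
          exact integral_indicator_one hA
      _ ≤ r * h ^ β + ℓ / h := by
          have := hmargin h hh
          gcongr
  -- goal RHS pieces nonneg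
  have hrpow1 : (1:ℝ) ≤ r ^ (1/(β+1)) :=
    Real.one_le_rpow hr (by positivity)
  have hlpow0 : 0 ≤ ℓ ^ (β/(β+1)) := Real.rpow_nonneg hl0 _
  have hbpow_pos : 0 < β ^ (β/(β+1)) := by
    rcases eq_or_lt_of_le hβ with h0 | h0
    · rw [← h0]; norm_num
    · exact Real.rpow_pos_of_pos h0 _
  constructor
  · -- main inequality
    rcases eq_or_lt_of_le hβ with hb0 | hb0
    · -- β = 0
      subst hb0
      have hle1 : (∫ x, g x ∂μ) ≤ 1 := by
        calc (∫ x, g x ∂μ) ≤ ∫ _x, (1:ℝ) ∂μ :=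
              integral_mono hg_int (integrable_const 1) (fun x => (hg01 x).2)
          _ = 1 := by simp
      have : ((0 + 1) / (0:ℝ) ^ ((0:ℝ) / (0 + 1))) * r ^ (1 / (0 + 1 : ℝ)) * ℓ ^ ((0:ℝ) / (0 + 1)) = r := by
        norm_num
      rw [this]
      linarith
    · rcases eq_or_lt_of_le hl0 with hl | hl
      · -- ℓ = 0
        have hRHS : ((β + 1) / β ^ (β / (β + 1))) * r ^ (1 / (β + 1)) * ℓ ^ (β / (β + 1)) = 0 := by
          rw [← hl, Real.zero_rpow (by positivity : β/(β+1) ≠ 0), mul_zero]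
        rw [hRHS]
        by_contra hD
        push_neg at hD
        set D := ∫ x, g x ∂μ with hD_def
        have hDpos : 0 < D := hD
        have hh : (0:ℝ) < (D/(2*r)) ^ (1/β) :=
          Real.rpow_pos_of_pos (by positivity) _
        have hk := key _ hh
        rw [← hl] at hk
        have hpow : ((D/(2*r)) ^ (1/β)) ^ β = D/(2*r) := by
          rw [← Real.rpow_mul (by positivity : (0:ℝ) ≤ D/(2*r)), one_div,
            inv_mul_cancel₀ hb0.ne', Real.rpow_one]
        rw [hpow] at hk
        have : r * (D/(2*r)) = D/2 := by field_simp
        rw [this] at hk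
        simp at hk
        linarith
      · -- ℓ > 0, main case
        set p := β + 1 with hp_def
        have hβ0 : 0 < β := hb0
        have hcpos : 0 < ℓ / (r * β) := by positivity
        set h := (ℓ / (r * β)) ^ (1/p) with hh_def
        have hhpos : 0 < h := Real.rpow_pos_of_pos hcpos _
        have hlogh : Real.log h = (1/p) * (Real.log ℓ - Real.log r - Real.log β) := by
          rw [hh_def, Real.log_rpow hcpos, Real.log_div hl.ne' (by positivity),
            Real.log_mul hr0.ne' hβ0.ne']
          ring
        have hE1 : r * h ^ β = r ^ (1/p) * ℓ ^ (β/p) / β ^ (β/p) := by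
          have h1 : 0 < r * h ^ β := by positivity
          have h2 : 0 < r ^ (1/p) * ℓ ^ (β/p) / β ^ (β/p) := by positivity
          apply Real.log_injOn_pos (Set.mem_Ioi.2 h1) (Set.mem_Ioi.2 h2)
          rw [Real.log_mul hr0.ne' (by positivity), Real.log_rpow hhpos,
            Real.log_div (by positivity) (by positivity),
            Real.log_mul (by positivity) (by positivity),
            Real.log_rpow hr0, Real.log_rpow hl, Real.log_rpow hβ0, hlogh]
          field_simp
          rw [hp_def]
          ring
        have hE2 : ℓ / h = r ^ (1/p) * ℓ ^ (β/p) * β ^ (1/p) := by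
          have h1 : 0 < ℓ / h := by positivity
          have h2 : 0 < r ^ (1/p) * ℓ ^ (β/p) * β ^ (1/p) := by positivity
          apply Real.log_injOn_pos (Set.mem_Ioi.2 h1) (Set.mem_Ioi.2 h2)
          rw [Real.log_div hl.ne' hhpos.ne',
            Real.log_mul (by positivity) (by positivity),
            Real.log_mul (by positivity) (by positivity),
            Real.log_rpow hr0, Real.log_rpow hl, Real.log_rpow hβ0, hlogh]
          field_simp
          rw [hp_def]
          ring
        have hβpow : β ^ ((1:ℝ)/p) = β / β ^ (β/p) := by
          have h1p : (1:ℝ)/p = 1 - β/p := by rw [hp_def]; field_simp; ring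
          rw [h1p, Real.rpow_sub hβ0, Real.rpow_one]
        calc (∫ x, g x ∂μ) ≤ r * h ^ β + ℓ / h := key h hhpos
          _ = (p / β ^ (β / p)) * r ^ (1 / p) * ℓ ^ (β / p) := by
              rw [hE1, hE2, hβpow, hp_def]
              field_simp
              ring
  · -- second inequality
    have h2 := aux_two β hβ
    have hnn : 0 ≤ r ^ (1/(β+1)) * ℓ ^ (β/(β+1)) :=
      mul_nonneg (le_trans zero_le_one hrpow1) hlpow0
    calc ((β + 1) / β ^ (β / (β + 1))) * r ^ (1 / (β + 1)) * ℓ ^ (β / (β + 1))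
        = ((β + 1) / β ^ (β / (β + 1))) * (r ^ (1 / (β + 1)) * ℓ ^ (β / (β + 1))) := by ring
      _ ≤ 2 * (r ^ (1 / (β + 1)) * ℓ ^ (β / (β + 1))) := mul_le_mul_of_nonneg_right h2 hnn
      _ = 2 * r ^ (1 / (β + 1)) * ℓ ^ (β / (β + 1)) := by ring
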